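/- arXiv:2507.07489 — 6 statements merged into one kernel-verified Lean document; each statement's English description precedes it below -/
import Mathlib

section
/- Let C be a complete category, and let H be a class of objects of C such that a morphism f : X → Y in C is an isomorphism if and only if for each Z ∈ H the map (f ∘ −) : Hom(Z,X) → Hom(Z,Y) is a bijection. Then for any full subcategory E of C containing all objects of H, the inclusion functor E ↪ C preserves all limits that exist in E. -/
open CategoryTheory Limits

universe v u

/-- If isomorphisms in a complete category `C` are detected by a class `H` of objects,
then the inclusion of any full subcategory containing `H` preserves limits. -/
theorem stmt6 {C : Type u} [Category.{v} C] [HasLimits C] (H : Set C)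
    (hH : ∀ {X Y : C} (f : X ⟶ Y),
      IsIso f ↔ ∀ Z ∈ H, Function.Bijective (fun g : Z ⟶ X => g ≫ f))
    (P : C → Prop) (hP : ∀ Z ∈ H, P Z) :
    Nonempty (PreservesLimits (ObjectProperty.ι P)) := by
  set F := ObjectProperty.ι P with hF
  constructor
  constructor
  intro J instJ
  constructor
  intro K
  constructor
  intro c hc
  have t := limit.isLimit (K ⋙ F)
  have tfac : ∀ j, t.lift (F.mapCone c) ≫ limit.π (K ⋙ F) j = (c.π.app j).hom := by
    intro j
    exact t.fac (F.mapCone c) j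
  have hiso : IsIso (t.lift (F.mapCone c)) := by
    rw [hH]
    intro Z hZ
    constructor
    · intro g₁ g₂ hg
      let g₁' : (⟨Z, hP Z hZ⟩ : ObjectProperty.FullSubcategory P) ⟶ c.pt := ObjectProperty.homMk g₁
      let g₂' : (⟨Z, hP Z hZ⟩ : ObjectProperty.FullSubcategory P) ⟶ c.pt := ObjectProperty.homMk g₂
      have hg' : ∀ j, g₁' ≫ c.π.app j = g₂' ≫ c.π.app j := by
        intro j
        have := congrArg (· ≫ limit.π (K ⋙ F) j) hg
        apply ObjectProperty.hom_ext
        simpa [tfac, g₁', g₂'] using this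
      exact congrArg (fun g => g.hom) (hc.hom_ext hg')
    · intro h
      let s : Cone K :=
        { pt := ⟨Z, hP Z hZ⟩
          π := { app := fun j => ObjectProperty.homMk (h ≫ limit.π (K ⋙ F) j : Z ⟶ (K ⋙ F).obj j)
                 naturality := by
                   intro j j' f
                   apply ObjectProperty.hom_ext
                   rw [← limit.w (K ⋙ F) f]
                   simp [hF]
                   rfl } }
      refine ⟨(hc.lift s).hom, ?_⟩
      apply limit.hom_ext
      intro j
      simp only [Category.assoc, tfac]
      exact congrArg (fun g => g.hom) (hc.fac s j)
  exact ⟨IsLimit.ofPointIso t⟩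
end

section
/- Let C be a category admitting a conservative functor to Set that is representable by an object X of C, and suppose C is complete. Then for any full subcategory E of C containing X, the inclusion E ↪ C preserves all limits that exist in E. -/
open CategoryTheory Limits

universe v u

/-- If a complete category `C` has a conservative functor to `Set` represented by `X`,
then the inclusion of any full subcategory containing `X` preserves limits. -/
theorem stmt7 {C : Type u} [Category.{v} C] [HasLimits C] (F : C ⥤ Type v)
    [F.ReflectsIsomorphisms] (X : C) (e : coyoneda.obj (Opposite.op X) ≅ F)
    (P : C → Prop) (hX : P X) :
    Nonempty (PreservesLimits (ObjectProperty.ι P)) := by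
  have hF : PreservesLimits F := preservesLimits_of_natIso e
  have hR : ReflectsLimits F := reflectsLimits_of_reflectsIsomorphisms
  have iso : ObjectProperty.ι P ⋙ F ≅
      coyoneda.obj (Opposite.op (⟨X, hX⟩ : ObjectProperty.FullSubcategory P)) :=
    (Functor.isoWhiskerLeft (ObjectProperty.ι P) e.symm).trans
      (NatIso.ofComponents (fun Y => ((ObjectProperty.fullyFaithfulι P).homEquiv (X := ⟨X, hX⟩) (Y := Y)).symm.toIso) (by intros; rfl))
  have hcomp : PreservesLimits (ObjectProperty.ι P ⋙ F) :=
    preservesLimits_of_natIso iso.symm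
  exact ⟨preservesLimits_of_reflects_of_preserves (ObjectProperty.ι P) F⟩
end

section
/- If E is a full subcategory of the category KHaus of compact Hausdorff spaces that contains a one-point space, then the inclusion E ↪ KHaus preserves all limits that exist in E. -/
open CategoryTheory Limits

universe u

attribute [local instance] CategoryTheory.ConcreteCategory.instFunLike

/-- The inclusion of any full subcategory of `CompHaus` containing a one-point space
preserves limits. -/
theorem stmt10 (P : CompHaus.{u} → Prop) (X : CompHaus.{u})
    (hX : P X) (h₁ : Nonempty X) (h₂ : Subsingleton X) :
    Nonempty (PreservesLimits (ObjectProperty.ι P)) := by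
  constructor
  constructor
  intro J _
  constructor
  intro K
  constructor
  intro c hc
  let ι := ObjectProperty.ι P
  let t := limit.isLimit (K ⋙ ι)
  let φ : ι.obj c.pt ⟶ limit (K ⋙ ι) := t.lift (ι.mapCone c)
  have hφ : ∀ j, φ ≫ limit.π (K ⋙ ι) j = (c.π.app j).hom := fun j => t.fac (ι.mapCone c) j
  obtain ⟨x₀⟩ := h₁
  let mkCone : ∀ (f : ∀ j, X ⟶ ι.obj (K.obj j)),
      (∀ ⦃j j'⦄ (g : j ⟶ j'), f j ≫ ι.map (K.map g) = f j') → Cone K := fun f hf =>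
    { pt := ⟨X, hX⟩
      π := { app := fun j => ObjectProperty.homMk (f j)
             naturality := fun j j' g => ObjectProperty.hom_ext _ (by simp; exact (hf g).symm) } }
  have bij : Function.Bijective φ := by
    constructor
    · intro a b hab
      have hproj : ∀ j, (c.π.app j).hom a = (c.π.app j).hom b := by
        intro j
        have := congrArg (limit.π (K ⋙ ι) j) hab
        simpa [← hφ j] using this
      let ca : X ⟶ ι.obj c.pt := ConcreteCategory.ofHom ⟨fun _ => a, continuous_const⟩
      let cb : X ⟶ ι.obj c.pt := ConcreteCategory.ofHom ⟨fun _ => b, continuous_const⟩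
      let s := mkCone (fun j => ca ≫ (c.π.app j).hom) (fun j j' g => by
        exact congrArg (fun h => ca ≫ h) ((ι.mapCone c).w g))
      have ha : ∀ j, ObjectProperty.homMk ca ≫ c.π.app j = s.π.app j := fun j => rfl
      have hb : ∀ j, ObjectProperty.homMk cb ≫ c.π.app j = s.π.app j := by
        intro j
        show (ObjectProperty.homMk cb : s.pt ⟶ c.pt) ≫ c.π.app j = (ObjectProperty.homMk ca : s.pt ⟶ c.pt) ≫ c.π.app j
        ext x
        exact (hproj j).symm
      have h1 := hc.uniq s (ObjectProperty.homMk ca) ha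
      have h2 := hc.uniq s (ObjectProperty.homMk cb) hb
      have h3 : ca = cb := congrArg (fun f => f.hom) (h1.trans h2.symm)
      exact ConcreteCategory.congr_hom h3 x₀
    · intro l
      let s := mkCone (fun j => ConcreteCategory.ofHom ⟨fun _ => limit.π (K ⋙ ι) j l, continuous_const⟩)
        (fun j j' g => by
          ext x
          exact ConcreteCategory.congr_hom (limit.w (K ⋙ ι) g) l)
      let g := hc.lift s
      refine ⟨g.hom x₀, ?_⟩
      apply Concrete.limit_ext (K ⋙ ι)
      intro j
      have h1 : (g ≫ c.π.app j).hom x₀ = limit.π (K ⋙ ι) j l :=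
        congrArg (fun f => f.hom x₀) (hc.fac s j)
      have h2 : (φ ≫ limit.π (K ⋙ ι) j) (g.hom x₀) = (c.π.app j).hom (g.hom x₀) :=
        ConcreteCategory.congr_hom (hφ j) (g.hom x₀)
      calc limit.π (K ⋙ ι) j (φ (g.hom x₀)) = (φ ≫ limit.π (K ⋙ ι) j) (g.hom x₀) := rfl
        _ = (c.π.app j).hom (g.hom x₀) := h2
        _ = (g ≫ c.π.app j).hom x₀ := rfl
        _ = limit.π (K ⋙ ι) j l := h1
  haveI : IsIso φ := CompHausLike.isIso_of_bijective φ bij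
  exact ⟨IsLimit.ofPointIso t⟩
end

section
/- The product space βℕ × βℕ is not extremally disconnected, where βℕ is the Stone–Čech compactification of the discrete natural numbers. -/
open Set TopologicalSpace

private lemma scu_inj : Function.Injective (stoneCechUnit : ℕ → StoneCech ℕ) := by
  intro a b h
  have := eq_if_stoneCechUnit_eq (f := fun k : ℕ => decide (k = a)) (by continuity) h
  have hb : b = a := by simpa using this
  omega

private lemma scu_isOpen_singleton (n : ℕ) :
    IsOpen ({stoneCechUnit n} : Set (StoneCech ℕ)) := by
  set f : ℕ → Bool := fun k => decide (k = n) with hf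
  have hcf : Continuous f := by continuity
  set g := stoneCechExtend hcf with hg
  have hext : ∀ k, g (stoneCechUnit k) = f k := fun k =>
    congrFun (stoneCechExtend_extends hcf) k
  have hCopen : IsOpen (g ⁻¹' {true}) :=
    (isOpen_discrete _).preimage (continuous_stoneCechExtend hcf)
  have hsub : g ⁻¹' {true} ⊆ {stoneCechUnit n} := by
    have h1 : g ⁻¹' {true} ⊆ closure (g ⁻¹' {true} ∩ range stoneCechUnit) :=
      denseRange_stoneCechUnit.open_subset_closure_inter hCopen
    have h2 : g ⁻¹' {true} ∩ range stoneCechUnit ⊆ {stoneCechUnit n} := by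
      rintro x ⟨hx, k, rfl⟩
      have : f k = true := by rw [← hext k]; exact hx
      have : k = n := by simpa [hf] using this
      simp [this]
    refine fun x hx => ?_
    have := h1 hx
    have hcl : closure ({stoneCechUnit n} : Set (StoneCech ℕ)) = {stoneCechUnit n} :=
      isClosed_singleton.closure_eq
    exact hcl ▸ (closure_mono h2 this)
  have heq : g ⁻¹' {true} = {stoneCechUnit n} := by
    refine Subset.antisymm hsub ?_
    rintro x rfl
    simp only [mem_preimage, mem_singleton_iff]
    rw [hext n]; simp [hf]
  rw [← heq]; exact hCopen

private lemma scu_exists_notin : ∃ z : StoneCech ℕ, z ∉ range (stoneCechUnit : ℕ → StoneCech ℕ) := by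
  by_contra h
  push_neg at h
  have hcov : (univ : Set (StoneCech ℕ)) ⊆ ⋃ n : ℕ, {stoneCechUnit n} := by
    intro x _
    obtain ⟨n, rfl⟩ := h x
    exact mem_iUnion.2 ⟨n, rfl⟩
  obtain ⟨s, hs⟩ := isCompact_univ.elim_finite_subcover _
    (fun n => scu_isOpen_singleton n) hcov
  have : ∀ m : ℕ, m ∈ s := by
    intro m
    have := hs (mem_univ (stoneCechUnit m))
    simp only [mem_iUnion, mem_singleton_iff] at this
    obtain ⟨n, hn, he⟩ := this
    exact scu_inj he ▸ hn
  exact Set.infinite_univ (α := ℕ) (Set.Finite.subset s.finite_toSet (fun m _ => this m))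

private lemma scu_infinite_mem {U : Set (StoneCech ℕ)} (hU : IsOpen U) {z : StoneCech ℕ}
    (hzU : z ∈ U) (hz : z ∉ range (stoneCechUnit : ℕ → StoneCech ℕ)) :
    {k : ℕ | stoneCechUnit k ∈ U}.Infinite := by
  by_contra hinf
  rw [Set.not_infinite] at hinf
  rename' hinf => hfin
  have h1 : U ⊆ closure (U ∩ range stoneCechUnit) :=
    denseRange_stoneCechUnit.open_subset_closure_inter hU
  have h2 : U ∩ range stoneCechUnit ⊆ stoneCechUnit '' {k | stoneCechUnit k ∈ U} := by
    rintro x ⟨hx, k, rfl⟩; exact ⟨k, hx, rfl⟩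
  have hcl : IsClosed (stoneCechUnit '' {k | stoneCechUnit k ∈ U}) :=
    (hfin.image _).isClosed
  have : z ∈ stoneCechUnit '' {k | stoneCechUnit k ∈ U} := by
    have := h1 hzU
    have := closure_mono h2 this
    rwa [hcl.closure_eq] at this
  obtain ⟨k, -, rfl⟩ := this
  exact hz ⟨k, rfl⟩

/-- `βℕ × βℕ` is not extremally disconnected. -/
theorem stmt11 : ¬ ExtremallyDisconnected (StoneCech ℕ × StoneCech ℕ) := by
  intro h
  set A : Set (StoneCech ℕ × StoneCech ℕ) :=
    ⋃ (p : ℕ × ℕ) (_ : p.1 < p.2), {stoneCechUnit p.1} ×ˢ {stoneCechUnit p.2} with hA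
  set B : Set (StoneCech ℕ × StoneCech ℕ) :=
    ⋃ (p : ℕ × ℕ) (_ : p.2 < p.1), {stoneCechUnit p.1} ×ˢ {stoneCechUnit p.2} with hB
  have hAopen : IsOpen A := isOpen_iUnion fun p => isOpen_iUnion fun _ =>
    (scu_isOpen_singleton p.1).prod (scu_isOpen_singleton p.2)
  have hBopen : IsOpen B := isOpen_iUnion fun p => isOpen_iUnion fun _ =>
    (scu_isOpen_singleton p.1).prod (scu_isOpen_singleton p.2)
  have hdisj : A ∩ B = ∅ := by
    ext ⟨x, y⟩
    simp only [hA, hB, mem_inter_iff, mem_iUnion, mem_prod, mem_singleton_iff,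
      mem_empty_iff_false, iff_false]
    rintro ⟨⟨⟨m, n⟩, hmn, rfl, rfl⟩, ⟨⟨m', n'⟩, hm'n', he1, he2⟩⟩
    have := scu_inj he1
    have := scu_inj he2
    omega
  obtain ⟨z, hz⟩ := scu_exists_notin
  -- (z,z) is in the closure of both A and B
  have hmem : ∀ (lt : Bool),
      (z, z) ∈ closure (if lt then A else B) := by
    intro lt
    rw [mem_closure_iff_nhds]
    intro W hW
    rw [mem_nhds_prod_iff] at hW
    obtain ⟨U, hU, V, hV, hUV⟩ := hW
    obtain ⟨U', hU's, hU'o, hzU'⟩ := mem_nhds_iff.1 hU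
    obtain ⟨V', hV's, hV'o, hzV'⟩ := mem_nhds_iff.1 hV
    have hinf : {k : ℕ | stoneCechUnit k ∈ U' ∩ V'}.Infinite :=
      scu_infinite_mem (hU'o.inter hV'o) ⟨hzU', hzV'⟩ hz
    obtain ⟨m, hm⟩ := hinf.nonempty
    obtain ⟨n, hn, hmn⟩ := hinf.exists_gt m
    cases lt with
    | true =>
        refine ⟨(stoneCechUnit m, stoneCechUnit n), hUV ⟨hU's hm.1, hV's hn.2⟩, ?_⟩
        simp only [if_true, hA, mem_iUnion]
        exact ⟨(m, n), hmn, rfl, rfl⟩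
    | false =>
        refine ⟨(stoneCechUnit n, stoneCechUnit m), hUV ⟨hU's hn.1, hV's hm.2⟩, ?_⟩
        simp only [Bool.false_eq_true, if_false, hB, mem_iUnion]
        exact ⟨(n, m), hmn, rfl, rfl⟩
  have hclA := hmem true
  have hclB := hmem false
  simp only [if_true, if_false] at hclA hclB
  -- closures of disjoint open sets are disjoint in an ED space
  have h1 : closure A ⊆ Bᶜ := by
    apply closure_minimal ?_ hBopen.isClosed_compl
    intro x hx hxB
    have hxAB : x ∈ A ∩ B := ⟨hx, hxB⟩
    rw [hdisj] at hxAB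
    exact hxAB
  have hclAopen : IsOpen (closure A) := h.open_closure A hAopen
  have h2 : closure B ⊆ (closure A)ᶜ := by
    apply closure_minimal ?_ hclAopen.isClosed_compl
    intro x hxB hxA
    exact h1 hxA hxB
  exact h2 hclB hclA
end

section
/- In a Priestley space, if the closure of every open upset is a clopen upset, then the downset of every clopen subset is clopen (i.e., every L-space is an Esakia space). -/
/-- Every L-space is an Esakia space: in a Priestley space, if the closure of every
open upset is a clopen upset, then the downset of every clopen set is clopen. -/
theorem stmt15 {X : Type*} [TopologicalSpace X] [PartialOrder X]
    [CompactSpace X] [PriestleySpace X]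
    (hL : ∀ U : Set X, IsOpen U → IsUpperSet U →
      IsClopen (closure U) ∧ IsUpperSet (closure U)) :
    ∀ V : Set X, IsClopen V → IsClopen {x : X | ∃ v ∈ V, x ≤ v} := by
  intro V hV
  set D := {x : X | ∃ v ∈ V, x ≤ v} with hDdef
  have hDclosed : IsClosed D := by
    rw [← isOpen_compl_iff, isOpen_iff_forall_mem_open]
    intro x hx
    have hxv : ∀ v : V, ¬ x ≤ (v : X) := fun v hle => hx ⟨v, v.2, hle⟩
    choose U hUc hUu hxU hvU using fun v : V => exists_isClopen_upper_of_not_le (hxv v)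
    have hcov : V ⊆ ⋃ v : V, (U v)ᶜ := fun y hy =>
      Set.mem_iUnion.2 ⟨⟨y, hy⟩, hvU ⟨y, hy⟩⟩
    obtain ⟨t, ht⟩ := (hV.1.isCompact).elim_finite_subcover (fun v : V => (U v)ᶜ)
      (fun v => (hUc v).1.isOpen_compl) hcov
    refine ⟨⋂ v ∈ t, U v, ?_, ?_, ?_⟩
    · intro y hy hyD
      obtain ⟨v, hvV, hle⟩ := hyD
      obtain ⟨w, hwt, hvw⟩ := Set.mem_iUnion₂.1 (ht hvV)
      exact hvw (hUu w hle (Set.mem_iInter₂.1 hy w hwt))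
    · exact isOpen_biInter_finset fun v _ => (hUc v).2
    · exact Set.mem_iInter₂.2 fun v _ => hxU v
  have hUup : IsUpperSet Dᶜ := by
    intro a b hab ha hb
    obtain ⟨v, hvV, hle⟩ := hb
    exact ha ⟨v, hvV, hab.trans hle⟩
  obtain ⟨hclop, hup⟩ := hL Dᶜ hDclosed.isOpen_compl hUup
  have hcl : closure Dᶜ = Dᶜ := by
    apply Set.Subset.antisymm _ subset_closure
    intro x hx
    by_contra hxD
    obtain ⟨v, hvV, hle⟩ := not_not.mp hxD
    have hv : v ∈ closure Dᶜ := hup hle hx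
    obtain ⟨y, hyV, hyD⟩ := mem_closure_iff.1 hv V hV.2 hvV
    exact hyD ⟨y, hyV, le_refl y⟩
  rw [hcl] at hclop
  simpa using hclop.compl
end

section
/- A Priestley space is an Esakia space if and only if the closure of every open upset is an upset. -/
open Set

/-- A Priestley space is an Esakia space (the downset of every clopen set is clopen)
iff the closure of every open upset is an upset. -/
theorem stmt16 {X : Type*} [TopologicalSpace X] [PartialOrder X]
    [CompactSpace X] [PriestleySpace X] :
    (∀ V : Set X, IsClopen V → IsClopen {x : X | ∃ v ∈ V, x ≤ v}) ↔
      (∀ U : Set X, IsOpen U → IsUpperSet U → IsUpperSet (closure U)) := by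
  have hts : TotallySeparatedSpace X := totallySeparatedSpace_iff_exists_isClopen.mpr
    (fun a b hab => by
      obtain ⟨W, h1, _, h3, h4⟩ := exists_isClopen_upper_or_lower_of_ne hab
      exact ⟨W, h1, h3, h4⟩)
  constructor
  · intro hEsa U hUo hUu x y hxy hx
    by_contra hy
    obtain ⟨V, hV, hyV, hVsub⟩ :=
      compact_exists_isClopen_in_isOpen isClosed_closure.isOpen_compl hy
    have hD := hEsa V hV
    have hxD : x ∈ {x : X | ∃ v ∈ V, x ≤ v} := ⟨y, hyV, hxy⟩
    obtain ⟨u, huD, huU⟩ := mem_closure_iff.mp hx _ hD.isOpen hxD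
    obtain ⟨v, hvV, huv⟩ := huD
    exact hVsub hvV (subset_closure (hUu huv huU))
  · intro h V hV
    set D := {x : X | ∃ v ∈ V, x ≤ v} with hDdef
    have hDlow : IsLowerSet D := fun a b hba ⟨v, hv, hav⟩ => ⟨v, hv, hba.trans hav⟩
    have hVD : V ⊆ D := fun v hv => ⟨v, hv, le_rfl⟩
    have hDclosed : IsClosed D := by
      rw [← isOpen_compl_iff, isOpen_iff_mem_nhds]
      intro x hx
      have hxv : ∀ v : V, ∃ U : Set X, IsClopen U ∧ IsUpperSet U ∧ x ∈ U ∧ ↑v ∉ U := by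
        rintro ⟨v, hv⟩
        exact exists_isClopen_upper_of_not_le (fun hle => hx ⟨v, hv, hle⟩)
      choose Uf hUf hupf hxf hvf using hxv
      have hVcomp : IsCompact V := hV.isClosed.isCompact
      have cover : V ⊆ ⋃ v : V, (Uf v)ᶜ := fun v hv => mem_iUnion.mpr ⟨⟨v, hv⟩, hvf _⟩
      obtain ⟨t, ht⟩ := hVcomp.elim_finite_subcover _ (fun v => (hUf v).compl.isOpen) cover
      have hW : IsOpen (⋂ v ∈ t, Uf v) :=
        isOpen_biInter_finset (fun v _ => (hUf v).isOpen)
      have hxW : x ∈ ⋂ v ∈ t, Uf v := mem_iInter₂.mpr fun v _ => hxf v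
      have hWsub : (⋂ v ∈ t, Uf v) ⊆ Dᶜ := by
        rintro w hw ⟨v, hv, hwv⟩
        obtain ⟨i, hit, hvi⟩ := mem_iUnion₂.mp (ht hv)
        exact hvi (hupf i hwv (mem_iInter₂.mp hw i hit))
      exact Filter.mem_of_superset (hW.mem_nhds hxW) hWsub
    have hDopen : IsOpen D := by
      rw [← isClosed_compl_iff]
      have hcu : IsUpperSet (closure Dᶜ) :=
        h Dᶜ hDclosed.isOpen_compl hDlow.compl
      have : closure Dᶜ = Dᶜ := by
        apply Subset.antisymm _ subset_closure
        intro z hz hzD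
        obtain ⟨v, hv, hzv⟩ := hzD
        obtain ⟨w, hwV, hwD⟩ := mem_closure_iff.mp (hcu hzv hz) _ hV.isOpen hv
        exact hwD (hVD hwV)
      rw [← this]
      exact isClosed_closure
    exact ⟨hDclosed, hDopen⟩
end
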